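/- Let V, W be n-graded vector spaces over a field 𝕂 of characteristic 0, and let E be the ℤ×ℤⁿ-graded vector space with E^{(0,x)} = V^x, E^{(1,x)} = W^x and E^{(k,*)} = 0 otherwise. Let P ∈ M^{(1,0)}(E) (a bilinear map E×E → E of weight (0,0)), and set μ(X₁,X₂) := P(X₁,X₂) for X₁,X₂ ∈ V, λ(X)Y := P(X,Y) and ρ(X)Y := (−1)^{⟨x,y⟩} P(Y,X) for X ∈ V^x, Y ∈ W^y. Then [P,P]^Δ = 0 if and only if (μ,λ,ρ) is a multigraded bimodule structure, i.e.: (1) μ is associative; (2) λ(μ(X₁,X₂)) = λ(X₁)∘λ(X₂); (3) ρ(μ(X₁,X₂)) = (−1)^{⟨x₁,x₂⟩} ρ(X₂)∘ρ(X₁); (4) λ(X₁)∘ρ(X₂) = (−1)^{⟨x₁,x₂⟩} ρ(X₂)∘λ(X₁), for all homogeneous X_i ∈ V^{x_i}. -/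

import Mathlib

namespace NR

open Finset

/-- The sign `(-1)^z` for an integer `z`. -/
def sgn (z : ℤ) : ℤ := (-1) ^ z.natAbs

/-- The inner product `⟨x,y⟩ = ∑ i, xⁱ yⁱ` of multidegrees `x, y ∈ ℤⁿ`. -/
def pairZ (n : ℕ) (x y : Fin n → ℤ) : ℤ := ∑ i, x i * y i

/-- The inner product of `(n+1)`-degrees in `ℤ × ℤⁿ`. -/
def prE (n : ℕ) (g h : ℤ × (Fin n → ℤ)) : ℤ := g.1 * h.1 + pairZ n g.2 h.2

/-- Shift a sequence: `shiftSeq f i = (f i, f (i+1), …)`. -/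
def shiftSeq {β : Type*} (f : ℕ → β) (i : ℕ) : ℕ → β := fun m => f (m + i)

/-- Insert the value `c` at slot `i` of the sequence `f`, where `c` replaces
`a` consecutive entries of `f` (the entries `f i, …, f (i+a-1)`). -/
def insSeq {β : Type*} (a i : ℕ) (c : β) (f : ℕ → β) : ℕ → β :=
  fun l => if l < i then f l else if l = i then c else f (l + a - 1)

/-- Permute the first `a` entries of a sequence by `σ`. -/
def permSeq {β : Type*} (a : ℕ) (σ : Equiv.Perm (Fin a)) (f : ℕ → β) : ℕ → β :=
  fun l => if h : l < a then f ((σ ⟨l, h⟩ : Fin a) : ℕ) else f l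

/-- The multigraded sign `sign(σ, x)` of a permutation `σ` of `a` symbols with respect to
the multidegrees `x 0, …, x (a-1)`; it is the ordinary sign times the Koszul sign
collected over the inversions of `σ`. -/
def gsign {G : Type*} (pr : G → G → ℤ) (a : ℕ) (σ : Equiv.Perm (Fin a)) (x : ℕ → G) : ℤ :=
  ((Equiv.Perm.sign σ : ℤˣ) : ℤ) *
    (-1) ^ (∑ p ∈ Finset.univ.filter
        (fun p : Fin a × Fin a => p.1 < p.2 ∧ σ p.2 < σ p.1),
        pr (x ((σ p.1 : Fin a) : ℕ)) (x ((σ p.2 : Fin a) : ℕ))).natAbs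

section Ops

variable {G U : Type*} [AddCommGroup G] [AddCommGroup U]

/-- The operation `j(K₁)K₂` of the multigraded Nijenhuis–Richardson calculus.
`K₁` represents an element of `M^{(k₁,κ₁)}(U)` of arity `a₁ = k₁+1` and `K₂` one of
`M^{(k₂,κ₂)}(U)` of arity `a₂ = k₂+1`; an element of arity `a` is coded as a function
taking the sequence of multidegrees of the (homogeneous) arguments and the sequence of
arguments, and depending only on the first `a` of them. -/
def jop (pr : G → G → ℤ) (a₁ : ℕ) (κ₁ : G) (a₂ : ℕ) (κ₂ : G)
    (K₁ K₂ : (ℕ → G) → (ℕ → U) → U) : (ℕ → G) → (ℕ → U) → U :=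
  fun x X => ∑ i ∈ Finset.range a₂,
    sgn (((a₁ : ℤ) - 1) * (i : ℤ) + pr κ₁ (κ₂ + ∑ l ∈ Finset.range i, x l)) •
      K₂ (insSeq a₁ i ((∑ m ∈ Finset.range a₁, x (m + i)) + κ₁) x)
         (insSeq a₁ i (K₁ (shiftSeq x i) (shiftSeq X i)) X)

/-- The multigraded bracket `[K₁,K₂]^Δ = j(K₁)K₂ - (-1)^{k₁k₂+⟨κ₁,κ₂⟩} j(K₂)K₁`. -/
def brD (pr : G → G → ℤ) (a₁ : ℕ) (κ₁ : G) (a₂ : ℕ) (κ₂ : G)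
    (K₁ K₂ : (ℕ → G) → (ℕ → U) → U) : (ℕ → G) → (ℕ → U) → U :=
  fun x X => jop pr a₁ κ₁ a₂ κ₂ K₁ K₂ x X
    - sgn (((a₁ : ℤ) - 1) * ((a₂ : ℤ) - 1) + pr κ₁ κ₂) • jop pr a₂ κ₂ a₁ κ₁ K₂ K₁ x X

end Ops

/-- `K` represents a (`a`-linear) element of `M(U)`: it does not depend on the degree
sequence, depends only on the first `a` arguments, and is `𝕂`-multilinear in them. -/
def IsML (𝕂 : Type*) [Field 𝕂] {G U U' : Type*} [AddCommGroup U] [Module 𝕂 U]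
    [AddCommGroup U'] [Module 𝕂 U'] (a : ℕ) (K : (ℕ → G) → (ℕ → U) → U') : Prop :=
  (∀ x x' X, K x X = K x' X) ∧
  (∀ x X X', (∀ i, i < a → X i = X' i) → K x X = K x X') ∧
  (∀ x X i, i < a →
    (∀ u v : U, K x (Function.update X i (u + v))
        = K x (Function.update X i u) + K x (Function.update X i v)) ∧
    (∀ (r : 𝕂) (u : U), K x (Function.update X i (r • u)) = r • K x (Function.update X i u)))

/-- `K ∈ M^{(a-1,κ)}(U)`: an `a`-linear map mapping `U^{x₀} × ⋯ × U^{x_{a-1}}` into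
`U^{x₀+⋯+x_{a-1}+κ}`. -/
def MDeg (𝕂 : Type*) [Field 𝕂] {G U : Type*} [AddCommGroup G] [AddCommGroup U] [Module 𝕂 U]
    (gr : G → Submodule 𝕂 U) (a : ℕ) (κ : G) (K : (ℕ → G) → (ℕ → U) → U) : Prop :=
  IsML 𝕂 a K ∧
  ∀ x X, (∀ i, X i ∈ gr (x i)) → K x X ∈ gr ((∑ i ∈ Finset.range a, x i) + κ)

/-- The multigraded alternator `α` on elements of arity `a`. -/
def alt (𝕂 : Type*) [Field 𝕂] {G U U' : Type*} [AddCommGroup U'] [Module 𝕂 U']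
    (pr : G → G → ℤ) (a : ℕ) (K : (ℕ → G) → (ℕ → U) → U') : (ℕ → G) → (ℕ → U) → U' :=
  fun x X => (a.factorial : 𝕂)⁻¹ •
    ∑ σ : Equiv.Perm (Fin a),
      ((gsign pr a σ x : ℤ) : 𝕂) • K (permSeq a σ x) (permSeq a σ X)

/-- The operation `i(K₁)K₂ = ((k₁+k₂+1)!/((k₁+1)!(k₂+1)!)) α(j(K₁)K₂)`. -/
def iop (𝕂 : Type*) [Field 𝕂] {G U : Type*} [AddCommGroup G] [AddCommGroup U] [Module 𝕂 U]
    (pr : G → G → ℤ) (a₁ : ℕ) (κ₁ : G) (a₂ : ℕ) (κ₂ : G)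
    (K₁ K₂ : (ℕ → G) → (ℕ → U) → U) : (ℕ → G) → (ℕ → U) → U :=
  fun x X =>
    (((a₁ + a₂ - 1).factorial : 𝕂) / ((a₁.factorial : 𝕂) * (a₂.factorial : 𝕂))) •
      alt 𝕂 pr (a₁ + a₂ - 1) (jop pr a₁ κ₁ a₂ κ₂ K₁ K₂) x X

/-- The multigraded Nijenhuis–Richardson bracket
`[K₁,K₂]^∧ = i(K₁)K₂ - (-1)^{k₁k₂+⟨κ₁,κ₂⟩} i(K₂)K₁`. -/
def brW (𝕂 : Type*) [Field 𝕂] {G U : Type*} [AddCommGroup G] [AddCommGroup U] [Module 𝕂 U]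
    (pr : G → G → ℤ) (a₁ : ℕ) (κ₁ : G) (a₂ : ℕ) (κ₂ : G)
    (K₁ K₂ : (ℕ → G) → (ℕ → U) → U) : (ℕ → G) → (ℕ → U) → U :=
  fun x X => iop 𝕂 pr a₁ κ₁ a₂ κ₂ K₁ K₂ x X
    - sgn (((a₁ : ℤ) - 1) * ((a₂ : ℤ) - 1) + pr κ₁ κ₂) • iop 𝕂 pr a₂ κ₂ a₁ κ₁ K₂ K₁ x X

/-- `K ∈ A^{(a-1,κ)}(U) = α(M^{(a-1,κ)}(U))`, i.e. `K ∈ M^{(a-1,κ)}(U)` and `K` is fixed by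
the multigraded alternator (on homogeneous arguments). -/
def ADeg (𝕂 : Type*) [Field 𝕂] {G U : Type*} [AddCommGroup G] [AddCommGroup U] [Module 𝕂 U]
    (pr : G → G → ℤ) (gr : G → Submodule 𝕂 U) (a : ℕ) (κ : G)
    (K : (ℕ → G) → (ℕ → U) → U) : Prop :=
  MDeg 𝕂 gr a κ K ∧
  ∀ x X, (∀ i, X i ∈ gr (x i)) → alt 𝕂 pr a K x X = K x X

/-- The bilinear map `P` coded as an element of arity `2`. -/
def KofBil {𝕂 : Type*} [Field 𝕂] {G U : Type*} [AddCommGroup U] [Module 𝕂 U]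
    (P : U →ₗ[𝕂] U →ₗ[𝕂] U) : (ℕ → G) → (ℕ → U) → U :=
  fun _ X => P (X 0) (X 1)


section VW

variable {𝕂 : Type} [Field 𝕂] {V W : Type} [AddCommGroup V] [Module 𝕂 V]
  [AddCommGroup W] [Module 𝕂 W]

/-- The `(ℤ × ℤⁿ)`-grading of `E = V ⊕ W` with `E^{(0,x)} = V^x`, `E^{(1,x)} = W^x` and
`E^{(q,x)} = 0` otherwise. -/
def EgrP (𝕂 : Type) [Field 𝕂] (n : ℕ) {V W : Type} [AddCommGroup V] [Module 𝕂 V]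
    [AddCommGroup W] [Module 𝕂 W] (grV : (Fin n → ℤ) → Submodule 𝕂 V)
    (grW : (Fin n → ℤ) → Submodule 𝕂 W) : ℤ × (Fin n → ℤ) → Submodule 𝕂 (V × W) :=
  fun g =>
    if g.1 = 0 then (grV g.2).prod (⊥ : Submodule 𝕂 W)
    else if g.1 = 1 then (⊥ : Submodule 𝕂 V).prod (grW g.2)
    else ⊥

/-- `μ(X₁,X₂) = P(X₁,X₂)` (the `V`-part of `P` on `V × V`). -/
def bmu (P : (V × W) →ₗ[𝕂] (V × W) →ₗ[𝕂] (V × W)) (X₁ X₂ : V) : V :=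
  (P (X₁, 0) (X₂, 0)).1

/-- `λ(X)Y = P(X,Y)` for `X ∈ V`, `Y ∈ W`. -/
def blam (P : (V × W) →ₗ[𝕂] (V × W) →ₗ[𝕂] (V × W)) (X : V) (Y : W) : W :=
  (P (X, 0) ((0 : V), Y)).2

/-- `π(X)Y = P(X,Y)` for `X ∈ V`, `Y ∈ W` (the representation in the Lie case). -/
def bpi (P : (V × W) →ₗ[𝕂] (V × W) →ₗ[𝕂] (V × W)) (X : V) (Y : W) : W :=
  (P (X, 0) ((0 : V), Y)).2

/-- `ρ(X)Y = (−1)^{⟨x,y⟩} P(Y,X)` for homogeneous `X ∈ V^x`, `Y ∈ W^y`. -/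
def brho (n : ℕ) (P : (V × W) →ₗ[𝕂] (V × W) →ₗ[𝕂] (V × W))
    (x y : Fin n → ℤ) (X : V) (Y : W) : W :=
  sgn (pairZ n x y) • (P ((0 : V), Y) (X, (0 : W))).2

/-- A `k`-linear map `C ∈ L^{(k,c)}(V,W)` of weight `c` (coded as in `IsML`,
with values in `W`). -/
def LDeg (𝕂 : Type) [Field 𝕂] (n : ℕ) {V W : Type} [AddCommGroup V] [Module 𝕂 V]
    [AddCommGroup W] [Module 𝕂 W]
    (grV : (Fin n → ℤ) → Submodule 𝕂 V) (grW : (Fin n → ℤ) → Submodule 𝕂 W)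
    (a : ℕ) (c : Fin n → ℤ) (C : (ℕ → (Fin n → ℤ)) → (ℕ → V) → W) : Prop :=
  IsML 𝕂 a C ∧
  ∀ x X, (∀ i, X i ∈ grV (x i)) → C x X ∈ grW ((∑ i ∈ Finset.range a, x i) + c)

/-- A `k`-linear map `V × ⋯ × V → End(W)` of total weight `c`
(an element of `L^{(k,*)}(V, End(W))`). -/
def LEDeg (𝕂 : Type) [Field 𝕂] (n : ℕ) {V W : Type} [AddCommGroup V] [Module 𝕂 V]
    [AddCommGroup W] [Module 𝕂 W]
    (grV : (Fin n → ℤ) → Submodule 𝕂 V) (grW : (Fin n → ℤ) → Submodule 𝕂 W)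
    (a : ℕ) (c : Fin n → ℤ) (C : (ℕ → (Fin n → ℤ)) → (ℕ → V) → W → W) : Prop :=
  (∀ x x' X, C x X = C x' X) ∧
  (∀ x X X', (∀ i, i < a → X i = X' i) → C x X = C x X') ∧
  (∀ x X i, i < a →
    (∀ u v : V, C x (Function.update X i (u + v))
        = C x (Function.update X i u) + C x (Function.update X i v)) ∧
    (∀ (r : 𝕂) (u : V), C x (Function.update X i (r • u)) = r • C x (Function.update X i u))) ∧
  (∀ x X, IsLinearMap 𝕂 (C x X)) ∧
  (∀ x X, (∀ i, X i ∈ grV (x i)) → ∀ (y : Fin n → ℤ) (Y : W), Y ∈ grW y →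
    C x X Y ∈ grW ((∑ i ∈ Finset.range a, x i) + c + y))

/-- The element of `M^{(k-1,(1,c))}(E)` corresponding to `C ∈ L^{(k,c)}(V,W)`. -/
def KCof (n : ℕ) {V W : Type} [AddCommGroup V] [AddCommGroup W]
    (C : (ℕ → (Fin n → ℤ)) → (ℕ → V) → W) :
    (ℕ → ℤ × (Fin n → ℤ)) → (ℕ → V × W) → V × W :=
  fun x X => ((0 : V), C (fun i => (x i).2) (fun i => (X i).1))

/-- The element of `M^{(1,(-1,0))}(E)` corresponding to a multiplication `ν : W × W → W`. -/
def KNu {𝕂 : Type} [Field 𝕂] (n : ℕ) {V W : Type} [AddCommGroup V] [AddCommGroup W]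
    [Module 𝕂 W] (ν : W →ₗ[𝕂] W →ₗ[𝕂] W) :
    (ℕ → ℤ × (Fin n → ℤ)) → (ℕ → V × W) → V × W :=
  fun _ X => ((0 : V), ν (X 0).2 (X 1).2)

/-- Merge slots `i` and `i+1` of a sequence into the single value `c` at slot `i`. -/
def mergeAt {β : Type*} (i : ℕ) (c : β) (f : ℕ → β) : ℕ → β :=
  fun l => if l < i then f l else if l = i then c else f (l + 1)

/-- Delete slot `i` of a sequence. -/
def delAt {β : Type*} (i : ℕ) (f : ℕ → β) : ℕ → β :=
  fun l => if l < i then f l else f (l + 1)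

/-- Prepend the value `c` to a sequence. -/
def consAt {β : Type*} (c : β) (f : ℕ → β) : ℕ → β :=
  fun l => if l = 0 then c else f (l - 1)

/-- Insert the value `c` at slot `p` of a sequence (shifting the later entries). -/
def ins1 {β : Type*} (p : ℕ) (c : β) (f : ℕ → β) : ℕ → β :=
  fun l => if l < p then f l else if l = p then c else f (l - 1)

end VW


lemma sgn_eq (z : ℤ) : sgn z = if Even z then 1 else -1 := by
  unfold sgn
  rcases Int.even_or_odd z with h | h
  · rw [if_pos h, (Int.natAbs_even.mpr h).neg_one_pow]
  · rw [if_neg (Int.not_even_iff_odd.mpr h), (Int.natAbs_odd.mpr h).neg_one_pow]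

lemma sgn_add (a b : ℤ) : sgn (a + b) = sgn a * sgn b := by
  simp only [sgn_eq, Int.even_add]
  by_cases ha : Even a <;> by_cases hb : Even b <;> simp [ha, hb]

lemma sgn_congr {a b : ℤ} (h : a % 2 = b % 2) : sgn a = sgn b := by
  simp only [sgn_eq, Int.even_iff, h]

lemma sgn_mul_self (a : ℤ) : sgn a * sgn a = 1 := by
  rw [sgn_eq]; by_cases h : Even a <;> simp [h]

lemma sgn_sgn {M : Type*} [AddCommGroup M] (a : ℤ) (z : M) : sgn a • sgn a • z = z := by
  rw [smul_smul, sgn_mul_self, one_smul]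

lemma sgn_smul_inj {M : Type*} [AddCommGroup M] (t : ℤ) {a b : M} :
    sgn t • a = sgn t • b ↔ a = b :=
  ⟨fun h => by rw [← sgn_sgn t a, h, sgn_sgn], fun h => by rw [h]⟩

lemma pairZ_comm (n : ℕ) (x y : Fin n → ℤ) : pairZ n x y = pairZ n y x := by
  simp [pairZ, mul_comm]

lemma pairZ_add_right (n : ℕ) (x y z : Fin n → ℤ) :
    pairZ n x (y + z) = pairZ n x y + pairZ n x z := by
  simp [pairZ, mul_add, Finset.sum_add_distrib]

lemma pairZ_add_left (n : ℕ) (x y z : Fin n → ℤ) :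
    pairZ n (x + y) z = pairZ n x z + pairZ n y z := by
  simp [pairZ, add_mul, Finset.sum_add_distrib]

lemma prE_zero_left (n : ℕ) (h : ℤ × (Fin n → ℤ)) : prE n 0 h = 0 := by
  simp [prE, pairZ]

lemma brD_eq {𝕂 : Type} [Field 𝕂] (n : ℕ) {V : Type} [AddCommGroup V] [Module 𝕂 V]
    (P : V →ₗ[𝕂] V →ₗ[𝕂] V) (x : ℕ → ℤ × (Fin n → ℤ)) (X : ℕ → V) :
    brD (prE n) 2 0 2 0 (KofBil P) (KofBil P) x X
      = (2 : ℤ) • (P (P (X 0) (X 1)) (X 2) - P (X 0) (P (X 1) (X 2))) := by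
  simp [brD, jop, KofBil, Finset.sum_range_succ, insSeq, shiftSeq, prE_zero_left, sgn,
    smul_sub, two_smul, sub_eq_add_neg]
  abel


set_option linter.unusedSectionVars false
section Main

variable {𝕂 : Type} [Field 𝕂] [CharZero 𝕂] {n : ℕ}
  {V W : Type} [AddCommGroup V] [Module 𝕂 V] [AddCommGroup W] [Module 𝕂 W]
  {grV : (Fin n → ℤ) → Submodule 𝕂 V} {grW : (Fin n → ℤ) → Submodule 𝕂 W}
  {P : (V × W) →ₗ[𝕂] (V × W) →ₗ[𝕂] (V × W)}

lemma mem_E0 {x : Fin n → ℤ} {v : V × W} :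
    v ∈ EgrP 𝕂 n grV grW ((0 : ℤ), x) ↔ v.1 ∈ grV x ∧ v.2 = 0 := by
  simp [EgrP, Submodule.mem_prod]

lemma mem_E1 {x : Fin n → ℤ} {v : V × W} :
    v ∈ EgrP 𝕂 n grV grW ((1 : ℤ), x) ↔ v.1 = 0 ∧ v.2 ∈ grW x := by
  simp [EgrP, Submodule.mem_prod]

lemma mem_cases {g : ℤ × (Fin n → ℤ)} {v : V × W} (h : v ∈ EgrP 𝕂 n grV grW g) :
    (g.1 = 0 ∧ v.1 ∈ grV g.2 ∧ v.2 = 0) ∨ (g.1 = 1 ∧ v.1 = 0 ∧ v.2 ∈ grW g.2) ∨ v = 0 := by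
  unfold EgrP at h
  by_cases h0 : g.1 = 0
  · rw [if_pos h0] at h; exact Or.inl ⟨h0, h.1, (Submodule.mem_bot 𝕂).mp h.2⟩
  · rw [if_neg h0] at h
    by_cases h1 : g.1 = 1
    · rw [if_pos h1] at h; exact Or.inr (Or.inl ⟨h1, (Submodule.mem_bot 𝕂).mp h.1, h.2⟩)
    · rw [if_neg h1] at h; exact Or.inr (Or.inr ((Submodule.mem_bot 𝕂).mp h))

variable (hP : ∀ (g h : ℤ × (Fin n → ℤ)) (u v : V × W),
      u ∈ EgrP 𝕂 n grV grW g → v ∈ EgrP 𝕂 n grV grW h →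
        P u v ∈ EgrP 𝕂 n grV grW (g + h))

include hP

lemma PVV {x y : Fin n → ℤ} {a b : V} (ha : a ∈ grV x) (hb : b ∈ grV y) :
    P (a, 0) (b, 0) = (bmu P a b, 0) ∧ bmu P a b ∈ grV (x + y) := by
  have := hP (0, x) (0, y) (a, 0) (b, 0) (mem_E0.mpr ⟨ha, rfl⟩) (mem_E0.mpr ⟨hb, rfl⟩)
  rw [show ((0 : ℤ), x) + ((0 : ℤ), y) = ((0 : ℤ), x + y) by rfl, mem_E0] at this
  exact ⟨Prod.ext rfl this.2, this.1⟩

lemma PVW {x y : Fin n → ℤ} {a : V} {b : W} (ha : a ∈ grV x) (hb : b ∈ grW y) :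
    P (a, 0) (0, b) = (0, blam P a b) ∧ blam P a b ∈ grW (x + y) := by
  have := hP (0, x) (1, y) (a, 0) (0, b) (mem_E0.mpr ⟨ha, rfl⟩) (mem_E1.mpr ⟨rfl, hb⟩)
  rw [show ((0 : ℤ), x) + ((1 : ℤ), y) = ((1 : ℤ), x + y) by rfl, mem_E1] at this
  exact ⟨Prod.ext this.1 rfl, this.2⟩

lemma PWW {y₁ y₂ : Fin n → ℤ} {b₁ b₂ : W} (h₁ : b₁ ∈ grW y₁) (h₂ : b₂ ∈ grW y₂) :
    P ((0 : V), b₁) ((0 : V), b₂) = 0 := by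
  have := hP (1, y₁) (1, y₂) (0, b₁) (0, b₂) (mem_E1.mpr ⟨rfl, h₁⟩) (mem_E1.mpr ⟨rfl, h₂⟩)
  rw [show ((1 : ℤ), y₁) + ((1 : ℤ), y₂) = ((2 : ℤ), y₁ + y₂) by rfl] at this
  unfold EgrP at this
  norm_num at this
  exact this

lemma PWV {x y : Fin n → ℤ} {a : V} {b : W} (ha : a ∈ grV x) (hb : b ∈ grW y) :
    P ((0 : V), b) (a, 0) = (0, sgn (pairZ n x y) • brho n P x y a b)
      ∧ brho n P x y a b ∈ grW (x + y) := by
  have := hP (1, y) (0, x) (0, b) (a, 0) (mem_E1.mpr ⟨rfl, hb⟩) (mem_E0.mpr ⟨ha, rfl⟩)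
  rw [show ((1 : ℤ), y) + ((0 : ℤ), x) = ((1 : ℤ), y + x) by rfl, mem_E1] at this
  constructor
  · refine Prod.ext this.1 ?_
    show (P ((0:V), b) (a, 0)).2 = sgn (pairZ n x y) • brho n P x y a b
    rw [brho, sgn_sgn]
  · rw [add_comm]
    rw [brho]; exact zsmul_mem this.2 _

end Main


section Main2

variable {𝕂 : Type} [Field 𝕂] [CharZero 𝕂] {n : ℕ}
  {V W : Type} [AddCommGroup V] [Module 𝕂 V] [AddCommGroup W] [Module 𝕂 W]
  {grV : (Fin n → ℤ) → Submodule 𝕂 V} {grW : (Fin n → ℤ) → Submodule 𝕂 W}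
  {P : (V × W) →ₗ[𝕂] (V × W) →ₗ[𝕂] (V × W)}

lemma sgn_smul_eq_iff {M : Type*} [AddCommGroup M] {a b : M} {s t u : ℤ}
    (h : (t + s) % 2 = u % 2) : sgn s • a = sgn t • b ↔ b = sgn u • a := by
  rw [← sgn_congr h, sgn_add]
  constructor
  · intro hh; rw [← smul_smul, hh, sgn_sgn]
  · intro hh; rw [hh, smul_smul, ← mul_assoc, sgn_mul_self, one_mul]

lemma brho_zsmul (x y : Fin n → ℤ) (X : V) (c : ℤ) (Y : W) :
    brho n P x y X (c • Y) = c • brho n P x y X Y := by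
  unfold brho
  have h1 : ((0 : V), c • Y) = c • ((0 : V), Y) := by simp
  rw [h1, map_zsmul, LinearMap.smul_apply, Prod.smul_snd, smul_comm]

lemma blam_zsmul (a : V) (c : ℤ) (Y : W) :
    blam P a (c • Y) = c • blam P a Y := by
  unfold blam
  have h1 : ((0 : V), c • Y) = c • ((0 : V), Y) := by simp
  rw [h1, map_zsmul, Prod.smul_snd]

lemma blam_add (a : V) (Y₁ Y₂ : W) :
    blam P a (Y₁ + Y₂) = blam P a Y₁ + blam P a Y₂ := by
  unfold blam
  have h1 : ((0 : V), Y₁ + Y₂) = ((0 : V), Y₁) + ((0 : V), Y₂) := by simp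
  rw [h1, map_add, Prod.snd_add]

lemma blam_zero (a : V) : blam P a (0 : W) = 0 := by
  unfold blam
  have h1 : ((0 : V), (0 : W)) = (0 : V × W) := rfl
  rw [h1, map_zero]; rfl

lemma mem_cases' {g : ℤ × (Fin n → ℤ)} {v : V × W} (h : v ∈ EgrP 𝕂 n grV grW g) :
    (∃ a ∈ grV g.2, v = (a, 0)) ∨ (∃ b ∈ grW g.2, v = ((0 : V), b)) ∨ v = 0 := by
  rcases mem_cases h with ⟨_, hv, hz⟩ | ⟨_, hz, hw⟩ | h0
  · exact Or.inl ⟨v.1, hv, Prod.ext rfl hz⟩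
  · exact Or.inr (Or.inl ⟨v.2, hw, Prod.ext hz rfl⟩)
  · exact Or.inr (Or.inr h0)

variable (hP : ∀ (g h : ℤ × (Fin n → ℤ)) (u v : V × W),
      u ∈ EgrP 𝕂 n grV grW g → v ∈ EgrP 𝕂 n grV grW h →
        P u v ∈ EgrP 𝕂 n grV grW (g + h))

include hP

lemma case1iff {x₁ x₂ x₃ : Fin n → ℤ} {X₁ X₂ X₃ : V}
    (h1 : X₁ ∈ grV x₁) (h2 : X₂ ∈ grV x₂) (h3 : X₃ ∈ grV x₃) :
    (P (P (X₁, (0 : W)) (X₂, 0)) (X₃, 0) = P (X₁, 0) (P (X₂, 0) (X₃, 0))) ↔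
      bmu P (bmu P X₁ X₂) X₃ = bmu P X₁ (bmu P X₂ X₃) := by
  obtain ⟨e1, m1⟩ := PVV hP h1 h2
  obtain ⟨e2, m2⟩ := PVV hP h2 h3
  obtain ⟨e3, _⟩ := PVV hP m1 h3
  obtain ⟨e4, _⟩ := PVV hP h1 m2
  rw [e1, e2, e3, e4, Prod.mk.injEq]; simp

lemma case2iff {x₁ x₂ y : Fin n → ℤ} {X₁ X₂ : V} {Y : W}
    (h1 : X₁ ∈ grV x₁) (h2 : X₂ ∈ grV x₂) (hY : Y ∈ grW y) :
    (P (P (X₁, (0 : W)) (X₂, 0)) ((0 : V), Y) = P (X₁, 0) (P (X₂, 0) ((0 : V), Y))) ↔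
      blam P (bmu P X₁ X₂) Y = blam P X₁ (blam P X₂ Y) := by
  obtain ⟨e1, m1⟩ := PVV hP h1 h2
  obtain ⟨e2, m2⟩ := PVW hP h2 hY
  obtain ⟨e3, _⟩ := PVW hP m1 hY
  obtain ⟨e4, _⟩ := PVW hP h1 m2
  rw [e1, e2, e3, e4, Prod.mk.injEq]; simp

lemma case3iff {x₁ x₂ y : Fin n → ℤ} {X₁ X₂ : V} {Y : W}
    (h1 : X₁ ∈ grV x₁) (h2 : X₂ ∈ grV x₂) (hY : Y ∈ grW y) :
    (P (P ((0 : V), Y) (X₁, 0)) (X₂, (0 : W)) = P ((0 : V), Y) (P (X₁, (0 : W)) (X₂, 0))) ↔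
      brho n P (x₁ + x₂) y (bmu P X₁ X₂) Y
        = sgn (pairZ n x₁ x₂) • brho n P x₂ (x₁ + y) X₂ (brho n P x₁ y X₁ Y) := by
  obtain ⟨e1, m1⟩ := PWV hP h1 hY
  obtain ⟨e2, m2⟩ := PVV hP h1 h2
  obtain ⟨e3, _⟩ := PWV hP h2 (zsmul_mem m1 (sgn (pairZ n x₁ y)))
  obtain ⟨e4, _⟩ := PWV hP m2 hY
  rw [e1, e2, e3, e4, Prod.mk.injEq]
  simp only [true_and]
  rw [brho_zsmul, smul_smul, ← sgn_add]
  exact sgn_smul_eq_iff (by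
    rw [pairZ_add_right, pairZ_add_left, pairZ_comm n x₂ x₁]; omega)

lemma case4iff {x₁ x₂ y : Fin n → ℤ} {X₁ X₂ : V} {Y : W}
    (h1 : X₁ ∈ grV x₁) (h2 : X₂ ∈ grV x₂) (hY : Y ∈ grW y) :
    (P (P (X₁, (0 : W)) ((0 : V), Y)) (X₂, (0 : W)) = P (X₁, (0 : W)) (P ((0 : V), Y) (X₂, 0))) ↔
      blam P X₁ (brho n P x₂ y X₂ Y)
        = sgn (pairZ n x₁ x₂) • brho n P x₂ (x₁ + y) X₂ (blam P X₁ Y) := by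
  obtain ⟨e1, m1⟩ := PVW hP h1 hY
  obtain ⟨e2, m2⟩ := PWV hP h2 hY
  obtain ⟨e3, _⟩ := PWV hP h2 m1
  obtain ⟨e4, _⟩ := PVW hP h1 (zsmul_mem m2 (sgn (pairZ n x₂ y)))
  rw [e1, e2, e3, e4, Prod.mk.injEq]
  simp only [true_and]
  rw [blam_zsmul]
  exact sgn_smul_eq_iff (by
    rw [pairZ_add_right, pairZ_comm n x₂ x₁]; omega)

end Main2

/-- Let `E` be the `(ℤ×ℤⁿ)`-graded space with `E^{(0,x)} = V^x`,
`E^{(1,x)} = W^x`, and let `P ∈ M^{(1,0)}(E)` be bilinear of weight `(0,0)`.  With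
`μ(X₁,X₂) = P(X₁,X₂)`, `λ(X)Y = P(X,Y)` and `ρ(X)Y = (−1)^{⟨x,y⟩}P(Y,X)`, one has
`[P,P]^Δ = 0` if and only if `(μ,λ,ρ)` is a multigraded bimodule structure, i.e.
(1) `μ` is associative, (2) `λ(μ(X₁,X₂)) = λ(X₁)∘λ(X₂)`,
(3) `ρ(μ(X₁,X₂)) = (−1)^{⟨x₁,x₂⟩} ρ(X₂)∘ρ(X₁)`, and
(4) `λ(X₁)∘ρ(X₂) = (−1)^{⟨x₁,x₂⟩} ρ(X₂)∘λ(X₁)` on homogeneous elements. -/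
theorem stmt12 {𝕂 : Type} [Field 𝕂] [CharZero 𝕂] (n : ℕ)
    {V W : Type} [AddCommGroup V] [Module 𝕂 V] [AddCommGroup W] [Module 𝕂 W]
    (grV : (Fin n → ℤ) → Submodule 𝕂 V) (hgrV : DirectSum.IsInternal grV)
    (grW : (Fin n → ℤ) → Submodule 𝕂 W) (hgrW : DirectSum.IsInternal grW)
    (P : (V × W) →ₗ[𝕂] (V × W) →ₗ[𝕂] (V × W))
    (hP : ∀ (g h : ℤ × (Fin n → ℤ)) (u v : V × W),
      u ∈ EgrP 𝕂 n grV grW g → v ∈ EgrP 𝕂 n grV grW h →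
        P u v ∈ EgrP 𝕂 n grV grW (g + h)) :
    (∀ (x : ℕ → ℤ × (Fin n → ℤ)) (X : ℕ → V × W),
        (∀ i, X i ∈ EgrP 𝕂 n grV grW (x i)) →
        brD (prE n) 2 0 2 0 (KofBil P) (KofBil P) x X = 0) ↔
      ((∀ (x₁ x₂ x₃ : Fin n → ℤ) (X₁ X₂ X₃ : V),
          X₁ ∈ grV x₁ → X₂ ∈ grV x₂ → X₃ ∈ grV x₃ →
          bmu P (bmu P X₁ X₂) X₃ = bmu P X₁ (bmu P X₂ X₃)) ∧
       (∀ (x₁ x₂ : Fin n → ℤ) (X₁ X₂ : V) (Y : W),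
          X₁ ∈ grV x₁ → X₂ ∈ grV x₂ →
          blam P (bmu P X₁ X₂) Y = blam P X₁ (blam P X₂ Y)) ∧
       (∀ (x₁ x₂ y : Fin n → ℤ) (X₁ X₂ : V) (Y : W),
          X₁ ∈ grV x₁ → X₂ ∈ grV x₂ → Y ∈ grW y →
          brho n P (x₁ + x₂) y (bmu P X₁ X₂) Y
            = sgn (pairZ n x₁ x₂) • brho n P x₂ (x₁ + y) X₂ (brho n P x₁ y X₁ Y)) ∧
       (∀ (x₁ x₂ y : Fin n → ℤ) (X₁ X₂ : V) (Y : W),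
          X₁ ∈ grV x₁ → X₂ ∈ grV x₂ → Y ∈ grW y →
          blam P X₁ (brho n P x₂ y X₂ Y)
            = sgn (pairZ n x₁ x₂) • brho n P x₂ (x₁ + y) X₂ (blam P X₁ Y))) := by

  have brDeq : ∀ (x : ℕ → ℤ × (Fin n → ℤ)) (X : ℕ → V × W),
      brD (prE n) 2 0 2 0 (KofBil P) (KofBil P) x X
        = (2 : ℤ) • (P (P (X 0) (X 1)) (X 2) - P (X 0) (P (X 1) (X 2))) :=
    fun x X => brD_eq n P x X
  constructor
  · intro H
    have Assoc : ∀ (g h k : ℤ × (Fin n → ℤ)) (u v w : V × W),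
        u ∈ EgrP 𝕂 n grV grW g → v ∈ EgrP 𝕂 n grV grW h → w ∈ EgrP 𝕂 n grV grW k →
        P (P u v) w = P u (P v w) := by
      intro g h k u v w hu hv hw
      have h2 := H (fun i => if i = 0 then g else if i = 1 then h else k)
          (fun i => if i = 0 then u else if i = 1 then v else w) ?_
      · rw [brDeq] at h2
        norm_num at h2
        have h3 : ((2 : ℤ) : 𝕂) • (P (P u v) w - P u (P v w)) = 0 := by
          rw [Int.cast_smul_eq_zsmul]; exact h2
        have h4 : P (P u v) w - P u (P v w) = 0 := by
          rcases smul_eq_zero.mp h3 with h | h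
          · exact absurd h (by norm_num)
          · exact h
        exact sub_eq_zero.mp h4
      · intro i
        rcases Nat.eq_zero_or_pos i with rfl | hi
        · simpa using hu
        rcases eq_or_ne i 1 with rfl | hi1
        · simpa using hv
        · simp only [Nat.pos_iff_ne_zero.mp hi, hi1, if_false]
          exact hw
    refine ⟨?_, ?_, ?_, ?_⟩
    · intro x₁ x₂ x₃ X₁ X₂ X₃ h1 h2 h3
      exact (case1iff hP h1 h2 h3).mp
        (Assoc (0, x₁) (0, x₂) (0, x₃) (X₁, 0) (X₂, 0) (X₃, 0)
          (mem_E0.mpr ⟨h1, rfl⟩) (mem_E0.mpr ⟨h2, rfl⟩) (mem_E0.mpr ⟨h3, rfl⟩))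
    · intro x₁ x₂ X₁ X₂ Y h1 h2
      have hY' : Y ∈ ⨆ y, grW y := by
        rw [hgrW.submodule_iSup_eq_top]; trivial
      refine Submodule.iSup_induction (motive := fun Y =>
          blam P (bmu P X₁ X₂) Y = blam P X₁ (blam P X₂ Y)) _ hY' ?_ ?_ ?_
      · intro y Y hY
        exact (case2iff hP h1 h2 hY).mp
          (Assoc (0, x₁) (0, x₂) (1, y) (X₁, 0) (X₂, 0) ((0 : V), Y)
            (mem_E0.mpr ⟨h1, rfl⟩) (mem_E0.mpr ⟨h2, rfl⟩) (mem_E1.mpr ⟨rfl, hY⟩))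
      · show blam P (bmu P X₁ X₂) 0 = blam P X₁ (blam P X₂ 0)
        rw [blam_zero, blam_zero, blam_zero]
      · intro Y₁ Y₂ hh1 hh2
        show blam P (bmu P X₁ X₂) (Y₁ + Y₂) = blam P X₁ (blam P X₂ (Y₁ + Y₂))
        rw [blam_add, blam_add, blam_add, hh1, hh2]
    · intro x₁ x₂ y X₁ X₂ Y h1 h2 hY
      exact (case3iff hP h1 h2 hY).mp
        (Assoc (1, y) (0, x₁) (0, x₂) ((0 : V), Y) (X₁, 0) (X₂, 0)
          (mem_E1.mpr ⟨rfl, hY⟩) (mem_E0.mpr ⟨h1, rfl⟩) (mem_E0.mpr ⟨h2, rfl⟩))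
    · intro x₁ x₂ y X₁ X₂ Y h1 h2 hY
      exact (case4iff hP h1 h2 hY).mp
        (Assoc (0, x₁) (1, y) (0, x₂) (X₁, 0) ((0 : V), Y) (X₂, 0)
          (mem_E0.mpr ⟨h1, rfl⟩) (mem_E1.mpr ⟨rfl, hY⟩) (mem_E0.mpr ⟨h2, rfl⟩))
  · rintro ⟨h1, h2, h3, h4⟩ x X hX
    rw [brDeq]
    suffices hs : P (P (X 0) (X 1)) (X 2) = P (X 0) (P (X 1) (X 2)) by
      rw [hs, sub_self, smul_zero]
    rcases mem_cases' (hX 0) with ⟨a₀, ha₀, e₀⟩ | ⟨b₀, hb₀, e₀⟩ | e₀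
    rotate_right
    · rw [e₀]; simp
    -- X 0 in V
    · rcases mem_cases' (hX 1) with ⟨a₁, ha₁, e₁⟩ | ⟨b₁, hb₁, e₁⟩ | e₁
      rotate_right
      · rw [e₁]; simp
      · -- VV?
        rcases mem_cases' (hX 2) with ⟨a₂, ha₂, e₂⟩ | ⟨b₂, hb₂, e₂⟩ | e₂
        rotate_right
        · rw [e₂]; simp
        · rw [e₀, e₁, e₂]
          exact (case1iff hP ha₀ ha₁ ha₂).mpr (h1 _ _ _ _ _ _ ha₀ ha₁ ha₂)
        · rw [e₀, e₁, e₂]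
          exact (case2iff hP ha₀ ha₁ hb₂).mpr (h2 _ _ _ _ _ ha₀ ha₁)
      · -- VW?
        rcases mem_cases' (hX 2) with ⟨a₂, ha₂, e₂⟩ | ⟨b₂, hb₂, e₂⟩ | e₂
        rotate_right
        · rw [e₂]; simp
        · rw [e₀, e₁, e₂]
          exact (case4iff hP ha₀ ha₂ hb₁).mpr (h4 _ _ _ _ _ _ ha₀ ha₂ hb₁)
        · -- VWW
          rw [e₀, e₁, e₂, (PVW hP ha₀ hb₁).1, PWW hP (PVW hP ha₀ hb₁).2 hb₂,
            PWW hP hb₁ hb₂, map_zero]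
    -- X 0 in W
    · rcases mem_cases' (hX 1) with ⟨a₁, ha₁, e₁⟩ | ⟨b₁, hb₁, e₁⟩ | e₁
      rotate_right
      · rw [e₁]; simp
      · -- WV?
        rcases mem_cases' (hX 2) with ⟨a₂, ha₂, e₂⟩ | ⟨b₂, hb₂, e₂⟩ | e₂
        rotate_right
        · rw [e₂]; simp
        · rw [e₀, e₁, e₂]
          exact (case3iff hP ha₁ ha₂ hb₀).mpr (h3 _ _ _ _ _ _ ha₁ ha₂ hb₀)
        · -- WVW
          rw [e₀, e₁, e₂, (PWV hP ha₁ hb₀).1,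
            PWW hP (zsmul_mem (PWV hP ha₁ hb₀).2 _) hb₂,
            (PVW hP ha₁ hb₂).1, PWW hP hb₀ (PVW hP ha₁ hb₂).2]
      · -- WW?
        rcases mem_cases' (hX 2) with ⟨a₂, ha₂, e₂⟩ | ⟨b₂, hb₂, e₂⟩ | e₂
        rotate_right
        · rw [e₂]; simp
        · -- WWV
          rw [e₀, e₁, e₂, PWW hP hb₀ hb₁, map_zero, LinearMap.zero_apply,
            (PWV hP ha₂ hb₁).1, PWW hP hb₀ (zsmul_mem (PWV hP ha₂ hb₁).2 _)]
        · -- WWW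
          rw [e₀, e₁, e₂, PWW hP hb₀ hb₁, map_zero, LinearMap.zero_apply]
          rw [PWW hP hb₁ hb₂, map_zero]


end NR
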